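/- Let F ∈ 𝒦 with 𝔼[|F(·,e)|^{d+α}] < ∞ for all e ∈ U and some α > 0, and set β = α/2. Then for ℙ-almost every ω, for every γ with 2d < γ < 2d + β, the double integral ∫_{B_1} ∫_{B_{2d/n}(x) ∩ B_1} |g_n(y) − g_n(x)|^{d+β} / |y − x|^γ dy dx converges as n → ∞ to a finite limit. -/

import Mathlib

open MeasureTheory Filter
open scoped ENNReal

namespace RWRE7

/-- Steps of the nearest-neighbor walk: a coordinate direction and a sign.
This enumerates `U = {e ∈ ℤ^d : |e|₁ = 1}`. -/
abbrev Step (d : ℕ) := Fin d × Bool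

/-- The lattice vector corresponding to a step. -/
def vec {d : ℕ} (σ : Step d) : Fin d → ℤ :=
  fun i => if i = σ.1 then (if σ.2 then 1 else -1) else 0

/-- Position after the first `j` steps of the step sequence `s`. -/
def pos {d n : ℕ} (s : Fin n → Step d) (j : Fin n) : Fin d → ℤ :=
  ∑ k : Fin n, if (k : ℕ) < (j : ℕ) then vec (s k) else 0

/-- Class 𝒦 : measurable, `L^{d+α}` moment, mean zero, zero sum over closed loops. -/
def MemK {Ω : Type*} [MeasurableSpace Ω] (d : ℕ) (P : Measure Ω)
    (T : (Fin d → ℤ) → Ω → Ω) (F : Ω → Step d → ℝ) : Prop :=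
  (∀ σ, Measurable (fun ω => F ω σ)) ∧
  (∀ σ, ∃ α : ℝ, 0 < α ∧ Integrable (fun ω => |F ω σ| ^ ((d : ℝ) + α)) P) ∧
  (∀ σ, ∫ ω, F ω σ ∂P = 0) ∧
  (∀ ω : Ω, ∀ n : ℕ, ∀ x0 : Fin d → ℤ, ∀ s : Fin n → Step d,
    (∑ k, vec (s k)) = 0 →
    ∑ j : Fin n, F (T (x0 + pos s j) ω) (s j) = 0)

/-- `Λ(λ) = inf_{F ∈ 𝒦} ess sup_ω log Σ_e p(ω,e) exp(⟨λ,e⟩ + F(ω,e))`. -/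
noncomputable def Lam {Ω : Type*} [MeasurableSpace Ω] (d : ℕ) (P : Measure Ω)
    (T : (Fin d → ℤ) → Ω → Ω) (p : Ω → Step d → ℝ) (lam : Fin d → ℝ) : EReal :=
  ⨅ (F : Ω → Step d → ℝ) (_ : MemK d P T F),
    essSup (fun ω => ((Real.log (∑ σ : Step d,
      p ω σ * Real.exp ((∑ i, lam i * (vec σ i : ℝ)) + F ω σ))) : EReal)) P

/-- Quenched expectation `E^{P_ω}[exp⟨λ, X_n⟩]`, written as a sum over all
nearest-neighbor paths of length `n` started at the origin. -/
noncomputable def quenchedExp {Ω : Type*} (d : ℕ)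
    (T : (Fin d → ℤ) → Ω → Ω) (p : Ω → Step d → ℝ) (lam : Fin d → ℝ)
    (ω : Ω) (n : ℕ) : ℝ :=
  ∑ s : Fin n → Step d,
    Real.exp (∑ i, lam i * (((∑ k, vec (s k)) i : ℤ) : ℝ)) *
      ∏ j : Fin n, p (T (pos s j) ω) (s j)

/-- The piecewise multilinear interpolation `f̂` of `f : ℤ^d → ℝ`. -/
noncomputable def fhat {d : ℕ} (f : (Fin d → ℤ) → ℝ) (t : Fin d → ℝ) : ℝ :=
  ∑ η : Fin d → Bool,
    (∏ i, if η i then Int.fract (t i) else 1 - Int.fract (t i)) *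
      f (fun i => ⌊t i⌋ + (if η i then 1 else 0))

/-- The rescaled functions `g_n(s) = f̂(ns)/n`. -/
noncomputable def gseq {d : ℕ} (f : (Fin d → ℤ) → ℝ) (n : ℕ) (s : Fin d → ℝ) : ℝ :=
  fhat f (fun i => (n : ℝ) * s i) / n

/-- The ℓ¹ norm on `ℝ^d`. -/
def l1 {d : ℕ} (x : Fin d → ℝ) : ℝ := ∑ i, |x i|


def unitv {d : ℕ} (i : Fin d) : Fin d → ℤ := fun j => if j = i then 1 else 0

section fhatlemmas
variable {d : ℕ} (f : (Fin d → ℤ) → ℝ)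

/-- the flip-at-i equivalence on Boolean cubes -/
def flipE {d : ℕ} (i : Fin d) : (Fin d → Bool) ≃ (Fin d → Bool) where
  toFun η := Function.update η i (!η i)
  invFun η := Function.update η i (!η i)
  left_inv η := by
    funext j
    by_cases h : j = i
    · subst h; simp
    · simp [Function.update_of_ne h]
  right_inv η := by
    funext j
    by_cases h : j = i
    · subst h; simp
    · simp [Function.update_of_ne h]

lemma flipE_apply_self {d : ℕ} (i : Fin d) (η : Fin d → Bool) :
    flipE i η i = !η i := by simp [flipE]

lemma flipE_apply_ne {d : ℕ} (i : Fin d) (η : Fin d → Bool) (j : Fin d) (h : j ≠ i) :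
    flipE i η j = η j := by simp [flipE, Function.update_of_ne h]

/-- affine formula in one coordinate, on `[m, m+1)`. -/
lemma fhat_update_affine (t : Fin d → ℝ) (i : Fin d) (m : ℤ) (u : ℝ)
    (h1 : (m : ℝ) ≤ u) (h2 : u < m + 1) :
    fhat f (Function.update t i u)
      = (1 - (u - m)) * fhat f (Function.update t i (m : ℝ))
        + (u - m) * fhat f (Function.update t i ((m : ℝ) + 1)) := by
  classical
  have hfl : ⌊u⌋ = m := by
    rw [Int.floor_eq_iff]; constructor <;> [exact h1; exact_mod_cast h2]
  have hfr : Int.fract u = u - m := by rw [Int.fract, hfl]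
  have hm1 : ((m : ℝ) + 1) = ((m + 1 : ℤ) : ℝ) := by push_cast; ring
  rw [hm1]
  set P : (Fin d → Bool) → ℝ := fun η =>
    ∏ j ∈ Finset.univ.erase i, (if η j then Int.fract (t j) else 1 - Int.fract (t j)) with hP
  have hsplit : ∀ (s : Fin d → ℝ), (∀ j, j ≠ i → s j = t j) →
      fhat f s = ∑ η : Fin d → Bool,
        ((if η i then Int.fract (s i) else 1 - Int.fract (s i)) * P η)
          * f (fun j => ⌊s j⌋ + (if η j then 1 else 0)) := by
    intro s hs
    unfold fhat
    refine Finset.sum_congr rfl fun η _ => ?_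
    congr 1
    rw [← Finset.mul_prod_erase Finset.univ _ (Finset.mem_univ i)]
    congr 1
    exact Finset.prod_congr rfl fun j hj => by
      rw [hs j (Finset.ne_of_mem_erase hj)]
  rw [hsplit (Function.update t i u) (fun j hj => Function.update_of_ne hj _ _),
      hsplit (Function.update t i (m:ℝ)) (fun j hj => Function.update_of_ne hj _ _),
      hsplit (Function.update t i ((m+1:ℤ):ℝ)) (fun j hj => Function.update_of_ne hj _ _)]
  simp only [Function.update_self, Int.fract_intCast, Int.floor_intCast, hfr]
  rw [Finset.mul_sum, Finset.mul_sum, ← Finset.sum_add_distrib]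
  -- the B-argument (floor of update at m) equals the A-argument (floor of update at u)
  have hargAB : ∀ η : Fin d → Bool,
      (fun j => ⌊Function.update t i u j⌋ + (if η j then (1:ℤ) else 0))
        = (fun j => ⌊Function.update t i (m:ℝ) j⌋ + (if η j then 1 else 0)) := by
    intro η; funext j
    by_cases hj : j = i
    · rw [hj, Function.update_self, Function.update_self, hfl, Int.floor_intCast]
    · rw [Function.update_of_ne hj, Function.update_of_ne hj]
  have key : (∑ η : Fin d → Bool,
      (if η i then (u - m) else 1 - (u - m)) * P η
        * f (fun j => ⌊Function.update t i u j⌋ + (if η j then 1 else 0)))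
    = ∑ η : Fin d → Bool,
      ((if η i then (0:ℝ) else 1 - (u - m)) * P η
          * f (fun j => ⌊Function.update t i u j⌋ + (if η j then 1 else 0))
        + (if η i then (0:ℝ) else (u - m)) * P η
          * f (fun j => ⌊Function.update t i ((m+1:ℤ):ℝ) j⌋ + (if η j then 1 else 0))) := by
    rw [Finset.sum_add_distrib]
    have flip_eq : (∑ η : Fin d → Bool,
        (if η i then (0:ℝ) else (u - m)) * P η
          * f (fun j => ⌊Function.update t i ((m+1:ℤ):ℝ) j⌋ + (if η j then 1 else 0)))
      = ∑ η : Fin d → Bool,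
        (if η i then (u - m) else (0:ℝ)) * P η
          * f (fun j => ⌊Function.update t i u j⌋ + (if η j then 1 else 0)) := by
      refine Fintype.sum_equiv (flipE i) _ _ fun η => ?_
      have hPeq : P (flipE i η) = P η := by
        refine Finset.prod_congr rfl fun j hj => ?_
        rw [flipE_apply_ne i η j (Finset.ne_of_mem_erase hj)]
      by_cases hη : η i
      · have h1' : flipE i η i = false := by rw [flipE_apply_self, hη]; rfl
        rw [h1', hη]
        simp
      · have h1' : flipE i η i = true := by
          rw [flipE_apply_self]
          simp [hη]
        rw [h1', hPeq]
        simp only [Bool.not_eq_true] at hη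
        rw [hη]
        simp only [Bool.false_eq_true, if_false, if_true]
        congr 2
        funext j
        by_cases hj : j = i
        · rw [hj, Function.update_self, Function.update_self, hfl, Int.floor_intCast]
          rw [flipE_apply_self]
          rw [hη]
          simp
        · rw [Function.update_of_ne hj, Function.update_of_ne hj,
            flipE_apply_ne i η j hj]
    rw [flip_eq, ← Finset.sum_add_distrib]
    refine Finset.sum_congr rfl fun η _ => ?_
    by_cases hη : η i <;> simp [hη] <;> ring
  rw [key]
  refine Finset.sum_congr rfl fun η _ => ?_
  rw [hargAB η]
  by_cases hη : η i <;> simp [hη] <;> ring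

/-- one-step bound: difference of fhat at integer endpoints of coordinate i. -/
lemma fhat_step (t : Fin d → ℝ) (i : Fin d) (m : ℤ) (K : ℝ)
    (H : ∀ z : Fin d → ℤ, |f (z + unitv i) - f z| ≤ K) :
    |fhat f (Function.update t i ((m : ℝ) + 1)) - fhat f (Function.update t i (m : ℝ))| ≤ K := by
  classical
  have hm1 : ((m : ℝ) + 1) = ((m + 1 : ℤ) : ℝ) := by push_cast; ring
  rw [hm1]
  set P : (Fin d → Bool) → ℝ := fun η =>
    ∏ j ∈ Finset.univ.erase i, (if η j then Int.fract (t j) else 1 - Int.fract (t j)) with hP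
  have hPnn : ∀ η, 0 ≤ P η := by
    intro η
    refine Finset.prod_nonneg fun j _ => ?_
    by_cases h : η j <;> simp [h, Int.fract_nonneg, (Int.fract_lt_one (t j)).le, sub_nonneg]
  have hsplit : ∀ (s : Fin d → ℝ), (∀ j, j ≠ i → s j = t j) →
      fhat f s = ∑ η : Fin d → Bool,
        ((if η i then Int.fract (s i) else 1 - Int.fract (s i)) * P η)
          * f (fun j => ⌊s j⌋ + (if η j then 1 else 0)) := by
    intro s hs
    unfold fhat
    refine Finset.sum_congr rfl fun η _ => ?_
    congr 1
    rw [← Finset.mul_prod_erase Finset.univ _ (Finset.mem_univ i)]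
    congr 1
    exact Finset.prod_congr rfl fun j hj => by
      rw [hs j (Finset.ne_of_mem_erase hj)]
  rw [hsplit (Function.update t i ((m+1:ℤ):ℝ)) (fun j hj => Function.update_of_ne hj _ _),
      hsplit (Function.update t i (m:ℝ)) (fun j hj => Function.update_of_ne hj _ _)]
  simp only [Function.update_self, Int.fract_intCast, Int.floor_intCast]
  rw [← Finset.sum_sub_distrib]
  have hterm : ∀ η : Fin d → Bool,
      ((if η i then (0:ℝ) else 1 - 0) * P η
          * f (fun j => ⌊Function.update t i ((m+1:ℤ):ℝ) j⌋ + (if η j then 1 else 0))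
        - (if η i then (0:ℝ) else 1 - 0) * P η
          * f (fun j => ⌊Function.update t i (m:ℝ) j⌋ + (if η j then 1 else 0)))
      = (if η i then (0:ℝ) else 1) * P η
          * (f ((fun j => ⌊Function.update t i (m:ℝ) j⌋ + (if η j then 1 else 0)) + unitv i)
            - f (fun j => ⌊Function.update t i (m:ℝ) j⌋ + (if η j then 1 else 0))) := by
    intro η
    by_cases hη : η i
    · simp [hη]
    · simp only [hη, Bool.false_eq_true, if_false, sub_zero]
      have harg : ((fun j => ⌊Function.update t i (m:ℝ) j⌋ + (if η j then (1:ℤ) else 0)) + unitv i)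
          = (fun j => ⌊Function.update t i ((m+1:ℤ):ℝ) j⌋ + (if η j then 1 else 0)) := by
        funext j
        simp only [Pi.add_apply, unitv]
        by_cases hj : j = i
        · rw [hj, Function.update_self, Function.update_self, Int.floor_intCast,
            Int.floor_intCast]
          simp [hη]
        · rw [Function.update_of_ne hj, Function.update_of_ne hj, if_neg hj]
          ring
      rw [harg]
      ring
  rw [Finset.sum_congr rfl fun η _ => hterm η]
  refine (Finset.abs_sum_le_sum_abs _ _).trans ?_
  have cfnn : ∀ η : Fin d → Bool, (0:ℝ) ≤ (if η i then (0:ℝ) else 1) * P η := by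
    intro η
    rcases Bool.eq_false_or_eq_true (η i) with h | h <;> simp [h, hPnn η]
  have hb : ∀ η : Fin d → Bool,
      |(if η i then (0:ℝ) else 1) * P η *
          (f ((fun j => ⌊Function.update t i (m:ℝ) j⌋ + if η j then 1 else 0) + unitv i) -
            f fun j => ⌊Function.update t i (m:ℝ) j⌋ + if η j then 1 else 0)|
        ≤ (if η i then (0:ℝ) else 1) * P η * K := by
    intro η
    rw [abs_mul, abs_of_nonneg (cfnn η)]
    exact mul_le_mul_of_nonneg_left (H _) (cfnn η)
  refine (Finset.sum_le_sum fun η _ => hb η).trans ?_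
  have hsum1 : (∑ η : Fin d → Bool, (if η i then (0:ℝ) else 1) * P η) = 1 := by
    have hterm2 : ∀ η : Fin d → Bool, (if η i then (0:ℝ) else 1) * P η
        = ∏ j, (if j = i then (if η j then (0:ℝ) else 1)
            else (if η j then Int.fract (t j) else 1 - Int.fract (t j))) := by
      intro η
      rw [← Finset.mul_prod_erase Finset.univ _ (Finset.mem_univ i), if_pos rfl]
      congr 1
      exact Finset.prod_congr rfl fun j hj => by
        rw [if_neg (Finset.ne_of_mem_erase hj)]
    rw [Finset.sum_congr rfl fun η _ => hterm2 η, ← Fintype.prod_sum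
      (fun (j : Fin d) (b : Bool) => if j = i then (if b then (0:ℝ) else 1)
        else (if b then Int.fract (t j) else 1 - Int.fract (t j)))]
    refine Finset.prod_eq_one fun j _ => ?_
    rw [Fintype.sum_bool]
    by_cases hj : j = i <;> simp [hj]
  calc (∑ η : Fin d → Bool, (if η i then (0:ℝ) else 1) * P η * K)
      = (∑ η : Fin d → Bool, (if η i then (0:ℝ) else 1) * P η) * K := by
        rw [Finset.sum_mul]
    _ = K := by rw [hsum1, one_mul]
    _ ≤ K := le_rfl

lemma fhat_interval (t : Fin d → ℝ) (i : Fin d) (m : ℤ) (u v : ℝ)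
    (hmu : (m : ℝ) ≤ u) (huv : u ≤ v) (hv : v ≤ (m : ℝ) + 1) :
    |fhat f (Function.update t i v) - fhat f (Function.update t i u)|
      ≤ |fhat f (Function.update t i ((m : ℝ) + 1)) - fhat f (Function.update t i (m : ℝ))|
          * (v - u) := by
  have hφ : ∀ w : ℝ, (m : ℝ) ≤ w → w ≤ (m : ℝ) + 1 →
      fhat f (Function.update t i w)
        = (1 - (w - m)) * fhat f (Function.update t i (m : ℝ))
          + (w - m) * fhat f (Function.update t i ((m : ℝ) + 1)) := by
    intro w h1 h2
    rcases lt_or_eq_of_le h2 with h2' | h2'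
    · exact fhat_update_affine f t i m w h1 h2'
    · rw [h2']; ring_nf
  rw [hφ v (hmu.trans huv) hv, hφ u hmu (huv.trans hv)]
  have heq : (1 - (v - m)) * fhat f (Function.update t i (m : ℝ))
      + (v - m) * fhat f (Function.update t i ((m : ℝ) + 1))
      - ((1 - (u - m)) * fhat f (Function.update t i (m : ℝ))
        + (u - m) * fhat f (Function.update t i ((m : ℝ) + 1)))
      = (fhat f (Function.update t i ((m : ℝ) + 1)) - fhat f (Function.update t i (m : ℝ)))
          * (v - u) := by ring
  rw [heq, abs_mul, abs_of_nonneg (sub_nonneg.2 huv)]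

lemma fhat_lip_coord (K : ℝ) (i : Fin d) (t : Fin d → ℝ)
    (H : ∀ z : Fin d → ℤ, |f (z + unitv i) - f z| ≤ K) :
    ∀ u v : ℝ, u ≤ v →
      |fhat f (Function.update t i v) - fhat f (Function.update t i u)| ≤ K * (v - u) := by
  have base : ∀ u v : ℝ, u ≤ v → v ≤ (⌊u⌋ : ℝ) + 1 →
      |fhat f (Function.update t i v) - fhat f (Function.update t i u)| ≤ K * (v - u) := by
    intro u v huv hv
    refine (fhat_interval f t i ⌊u⌋ u v (Int.floor_le u) huv hv).trans ?_
    exact mul_le_mul_of_nonneg_right (fhat_step f t i ⌊u⌋ K H) (sub_nonneg.2 huv)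
  have main : ∀ N : ℕ, ∀ u v : ℝ, u ≤ v → ⌊v⌋ - ⌊u⌋ ≤ (N : ℤ) →
      |fhat f (Function.update t i v) - fhat f (Function.update t i u)| ≤ K * (v - u) := by
    intro N
    induction N with
    | zero =>
      intro u v huv hN
      refine base u v huv ?_
      have h1 : (⌊v⌋ : ℝ) ≤ (⌊u⌋ : ℝ) := by exact_mod_cast by omega
      have := Int.lt_floor_add_one v
      linarith
    | succ N ih =>
      intro u v huv hN
      by_cases hc : v ≤ (⌊u⌋ : ℝ) + 1
      · exact base u v huv hc
      · push_neg at hc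
        have hw : ((⌊u⌋ : ℝ) + 1) = ((⌊u⌋ + 1 : ℤ) : ℝ) := by push_cast; ring
        have hwu : u ≤ (⌊u⌋ : ℝ) + 1 := (Int.lt_floor_add_one u).le
        have hfw : ⌊((⌊u⌋ : ℝ) + 1)⌋ = ⌊u⌋ + 1 := by rw [hw, Int.floor_intCast]
        have h1 : |fhat f (Function.update t i v)
              - fhat f (Function.update t i ((⌊u⌋ : ℝ) + 1))| ≤ K * (v - ((⌊u⌋ : ℝ) + 1)) := by
          refine ih ((⌊u⌋ : ℝ) + 1) v hc.le ?_
          rw [hfw]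
          have : ⌊u⌋ + 1 ≤ ⌊v⌋ := by
            rw [Int.le_floor, hw.symm]; exact hc.le
          omega
        have h2 : |fhat f (Function.update t i ((⌊u⌋ : ℝ) + 1))
              - fhat f (Function.update t i u)| ≤ K * (((⌊u⌋ : ℝ) + 1) - u) :=
          base u _ hwu le_rfl
        calc |fhat f (Function.update t i v) - fhat f (Function.update t i u)|
            ≤ |fhat f (Function.update t i v) - fhat f (Function.update t i ((⌊u⌋:ℝ)+1))|
              + |fhat f (Function.update t i ((⌊u⌋:ℝ)+1)) - fhat f (Function.update t i u)| :=
              abs_sub_le _ _ _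
          _ ≤ K * (v - ((⌊u⌋ : ℝ) + 1)) + K * (((⌊u⌋ : ℝ) + 1) - u) := add_le_add h1 h2
          _ = K * (v - u) := by ring
  intro u v huv
  exact main (⌊v⌋ - ⌊u⌋).toNat u v huv (Int.self_le_toNat _)

lemma abs_tele (g : ℕ → ℝ) : ∀ n, |g n - g 0| ≤ ∑ k ∈ Finset.range n, |g (k + 1) - g k| := by
  intro n
  induction n with
  | zero => simp
  | succ n ih =>
    rw [Finset.sum_range_succ]
    calc |g (n + 1) - g 0| ≤ |g (n+1) - g n| + |g n - g 0| := by
          have := abs_sub_le (g (n+1)) (g n) (g 0); linarith [this]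
      _ ≤ _ := by linarith [ih]

set_option maxHeartbeats 1000000 in
lemma fhat_lip (K : ℝ)
    (H : ∀ (z : Fin d → ℤ) (i : Fin d), |f (z + unitv i) - f z| ≤ K)
    (t t' : Fin d → ℝ) :
    |fhat f t' - fhat f t| ≤ K * l1 (t' - t) := by
  classical
  set s : ℕ → (Fin d → ℝ) := fun k j => if (j : ℕ) < k then t' j else t j with hs
  have hs0 : s 0 = t := funext fun j => if_neg (Nat.not_lt_zero _)
  have hsd : s d = t' := funext fun j => if_pos j.isLt
  set D : ℕ → ℝ := fun k => if h : k < d then |t' ⟨k, h⟩ - t ⟨k, h⟩| else 0 with hD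
  have hstep : ∀ k, k < d → |fhat f (s (k+1)) - fhat f (s k)| ≤ K * D k := by
    intro k hk
    set i : Fin d := ⟨k, hk⟩ with hi
    have h1 : s (k+1) = Function.update (s k) i (t' i) := by
      funext j
      by_cases hj : j = i
      · rw [hj, Function.update_self]
        show (if (i : ℕ) < k + 1 then t' i else t i) = t' i
        rw [if_pos (by simp [hi])]
      · rw [Function.update_of_ne hj]
        have hj' : (j : ℕ) ≠ k := fun h => hj (Fin.ext (by simp [hi, h]))
        show (if (j : ℕ) < k + 1 then t' j else t j) = (if (j : ℕ) < k then t' j else t j)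
        by_cases h2 : (j : ℕ) < k
        · rw [if_pos h2, if_pos (by omega)]
        · rw [if_neg h2, if_neg (by omega)]
    have h2 : s k = Function.update (s k) i (t i) := by
      funext j
      by_cases hj : j = i
      · rw [hj, Function.update_self]
        show (if (i : ℕ) < k then t' i else t i) = t i
        rw [if_neg (by simp [hi])]
      · rw [Function.update_of_ne hj]
    have hD' : D k = |t' i - t i| := by rw [hD]; simp only [dif_pos hk]; rfl
    rw [h1, hD']
    nth_rewrite 2 [h2]
    rcases le_total (t i) (t' i) with hle | hle
    · rw [abs_of_nonneg (sub_nonneg.2 hle)]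
      exact fhat_lip_coord f K i (s k) (fun z => H z i) _ _ hle
    · rw [abs_of_nonpos (sub_nonpos.2 hle), abs_sub_comm]
      have := fhat_lip_coord f K i (s k) (fun z => H z i) _ _ hle
      linarith [this]
  have hl1 : l1 (t' - t) = ∑ k ∈ Finset.range d, D k := by
    rw [← Fin.sum_univ_eq_sum_range D d]
    unfold l1
    refine Finset.sum_congr rfl fun i _ => ?_
    rw [hD]
    simp only [dif_pos i.isLt, Fin.eta, Pi.sub_apply]
  calc |fhat f t' - fhat f t| = |fhat f (s d) - fhat f (s 0)| := by rw [hs0, hsd]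
    _ ≤ ∑ k ∈ Finset.range d, |fhat f (s (k+1)) - fhat f (s k)| := abs_tele (fun k => fhat f (s k)) d
    _ ≤ ∑ k ∈ Finset.range d, K * D k :=
        Finset.sum_le_sum fun k hk => hstep k (Finset.mem_range.1 hk)
    _ = K * l1 (t' - t) := by rw [hl1, Finset.mul_sum]

end fhatlemmas

section clamp
variable {d : ℕ} (f : (Fin d → ℤ) → ℝ)

def clampf {d : ℕ} (a b : Fin d → ℤ) (z : Fin d → ℤ) : Fin d → ℤ :=
  fun i => max (a i) (min (b i) (z i))

lemma fhat_clamp_eq (a b : Fin d → ℤ) (t : Fin d → ℝ)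
    (ht : ∀ i, a i ≤ ⌊t i⌋ ∧ ⌊t i⌋ + 1 ≤ b i) :
    fhat (fun z => f (clampf a b z)) t = fhat f t := by
  unfold fhat
  refine Finset.sum_congr rfl fun η _ => ?_
  congr 1
  apply congrArg
  funext i
  have := ht i
  show max (a i) (min (b i) (⌊t i⌋ + (if η i then 1 else 0))) = ⌊t i⌋ + (if η i then 1 else 0)
  by_cases h : η i <;> simp [h] <;> omega

lemma clamp_increment (a b : Fin d → ℤ) (K : ℝ) (hK : 0 ≤ K)
    (hab : ∀ i, a i ≤ b i)
    (H : ∀ w : Fin d → ℤ, (∀ j, a j ≤ w j ∧ w j ≤ b j) →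
      ∀ i, |f (w + unitv i) - f w| ≤ K) :
    ∀ (z : Fin d → ℤ) (i : Fin d), |f (clampf a b (z + unitv i)) - f (clampf a b z)| ≤ K := by
  intro z i
  have hbox : ∀ j, a j ≤ clampf a b z j ∧ clampf a b z j ≤ b j := by
    intro j
    unfold clampf
    constructor
    · exact le_max_left _ _
    · have := hab j
      omega
  have hco : ∀ j, j ≠ i → clampf a b (z + unitv i) j = clampf a b z j := by
    intro j hj
    unfold clampf
    simp only [Pi.add_apply, unitv, if_neg hj, add_zero]
  rcases (by unfold clampf; simp only [Pi.add_apply, unitv, if_pos rfl]; omega :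
      clampf a b (z + unitv i) i = clampf a b z i ∨
      clampf a b (z + unitv i) i = clampf a b z i + 1) with hc | hc
  · have : clampf a b (z + unitv i) = clampf a b z := by
      funext j
      by_cases hj : j = i
      · rw [hj, hc]
      · exact hco j hj
    rw [this]
    simpa using hK
  · have : clampf a b (z + unitv i) = clampf a b z + unitv i := by
      funext j
      by_cases hj : j = i
      · rw [hj, hc]; simp [unitv]
      · rw [hco j hj]; simp [unitv, if_neg hj]
    rw [this]
    exact H _ hbox i

lemma fhat_lip_box (a b : Fin d → ℤ) (K : ℝ) (hK : 0 ≤ K)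
    (hab : ∀ i, a i ≤ b i)
    (t t' : Fin d → ℝ)
    (ht : ∀ i, a i ≤ ⌊t i⌋ ∧ ⌊t i⌋ + 1 ≤ b i)
    (ht' : ∀ i, a i ≤ ⌊t' i⌋ ∧ ⌊t' i⌋ + 1 ≤ b i)
    (H : ∀ w : Fin d → ℤ, (∀ j, a j ≤ w j ∧ w j ≤ b j) →
      ∀ i, |f (w + unitv i) - f w| ≤ K) :
    |fhat f t' - fhat f t| ≤ K * l1 (t' - t) := by
  rw [← fhat_clamp_eq f a b t ht, ← fhat_clamp_eq f a b t' ht']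
  exact fhat_lip (fun z => f (clampf a b z)) K (clamp_increment f a b K hK hab H) t t'

end clamp

section JB
variable {d : ℕ}

lemma l1_nonneg (x : Fin d → ℝ) : 0 ≤ l1 x :=
  Finset.sum_nonneg fun _ _ => abs_nonneg _

lemma continuous_l1 : Continuous (l1 : (Fin d → ℝ) → ℝ) :=
  continuous_finset_sum _ fun i _ => (continuous_apply i).abs

lemma meas_l1ball (x : Fin d → ℝ) (r : ℝ) : MeasurableSet {y : Fin d → ℝ | l1 (y - x) ≤ r} :=
  measurableSet_le (continuous_l1.comp (continuous_id.sub continuous_const)).measurable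
    measurable_const

lemma abs_le_l1 (y : Fin d → ℝ) (i : Fin d) : |y i| ≤ l1 y :=
  Finset.single_le_sum (f := fun i => |y i|) (fun _ _ => abs_nonneg _) (Finset.mem_univ i)

lemma vol_l1ball_le (x : Fin d → ℝ) (s : ℝ) (hs : 0 ≤ s) :
    volume {y : Fin d → ℝ | l1 (y - x) ≤ s} ≤ ENNReal.ofReal ((2 * s) ^ d) := by
  have hsub : {y : Fin d → ℝ | l1 (y - x) ≤ s}
      ⊆ Set.Icc (fun i => x i - s) (fun i => x i + s) := by
    intro y hy
    constructor <;> intro i <;>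
      · have h1 : |y i - x i| ≤ s := by
          have h2 := abs_le_l1 (y - x) i
          simp only [Pi.sub_apply] at h2
          exact h2.trans hy
        have := abs_le.1 h1
        simp only
        linarith [this.1, this.2]
  calc volume {y : Fin d → ℝ | l1 (y - x) ≤ s} ≤ volume (Set.Icc _ _) := measure_mono hsub
    _ = ∏ _i : Fin d, ENNReal.ofReal (2 * s) := by
        rw [Real.volume_Icc_pi]
        exact Finset.prod_congr rfl fun i _ => by congr 1; ring
    _ = ENNReal.ofReal ((2 * s) ^ d) := by
        rw [Finset.prod_const, Finset.card_univ, Fintype.card_fin,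
          ENNReal.ofReal_pow (by linarith)]

lemma Jbound (hd : 1 ≤ d) (q : ℝ) (hq : -(d : ℝ) < q) :
    ∃ C : ℝ≥0∞, C ≠ ⊤ ∧ ∀ (x : Fin d → ℝ) (r : ℝ), 0 < r →
      ∫⁻ y in {y : Fin d → ℝ | l1 (y - x) ≤ r}, ENNReal.ofReal (l1 (y - x) ^ q)
        ≤ C * ENNReal.ofReal (r ^ ((d : ℝ) + q)) := by
  classical
  rcases le_or_gt 0 q with hq0 | hq0
  · -- easy case : q ≥ 0
    refine ⟨ENNReal.ofReal ((2:ℝ) ^ d), ENNReal.ofReal_ne_top, fun x r hr => ?_⟩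
    calc ∫⁻ y in {y : Fin d → ℝ | l1 (y - x) ≤ r}, ENNReal.ofReal (l1 (y - x) ^ q)
        ≤ ∫⁻ _y in {y : Fin d → ℝ | l1 (y - x) ≤ r}, ENNReal.ofReal (r ^ q) := by
          refine setLIntegral_mono' (meas_l1ball x r) fun y hy => ?_
          exact ENNReal.ofReal_le_ofReal
            (Real.rpow_le_rpow (l1_nonneg _) hy hq0)
      _ = ENNReal.ofReal (r ^ q) * volume {y : Fin d → ℝ | l1 (y - x) ≤ r} :=
          setLIntegral_const _ _
      _ ≤ ENNReal.ofReal (r ^ q) * ENNReal.ofReal ((2 * r) ^ d) := by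
          exact mul_le_mul_right (vol_l1ball_le x r hr.le) _
      _ = ENNReal.ofReal ((2:ℝ) ^ d) * ENNReal.ofReal (r ^ ((d : ℝ) + q)) := by
          rw [← ENNReal.ofReal_mul (by positivity), ← ENNReal.ofReal_mul (by positivity)]
          congr 1
          rw [mul_pow, ← Real.rpow_natCast r d, ← Real.rpow_natCast 2 d, Real.rpow_add hr]
          ring
  · -- hard case : q < 0
    set ρ : ℝ := (2:ℝ) ^ (-(d:ℝ) - q) with hρ
    have hρpos : 0 < ρ := Real.rpow_pos_of_pos (by norm_num) _
    have hρlt : ρ < 1 := by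
      apply Real.rpow_lt_one_of_one_lt_of_neg (by norm_num)
      linarith
    have hgeom : (1 : ℝ≥0∞) - ENNReal.ofReal ρ ≠ 0 := by
      have : ENNReal.ofReal ρ < 1 := by
        rw [← ENNReal.ofReal_one]
        exact ENNReal.ofReal_lt_ofReal_iff_of_nonneg hρpos.le |>.2 hρlt
      simp only [ne_eq, tsub_eq_zero_iff_le, not_le]
      exact this
    refine ⟨ENNReal.ofReal ((2:ℝ) ^ ((d:ℝ) - q)) * ((1 : ℝ≥0∞) - ENNReal.ofReal ρ)⁻¹,
      ENNReal.mul_ne_top ENNReal.ofReal_ne_top (ENNReal.inv_ne_top.2 hgeom), fun x r hr => ?_⟩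
    set S : ℕ → Set (Fin d → ℝ) := fun j =>
      {y | r * (2:ℝ) ^ (-(j:ℝ) - 1) < l1 (y - x) ∧ l1 (y - x) ≤ r * (2:ℝ) ^ (-(j:ℝ))} with hS
    -- covering
    have hcover : {y : Fin d → ℝ | l1 (y - x) ≤ r}
        ⊆ {y : Fin d → ℝ | l1 (y - x) ≤ 0} ∪ ⋃ j, S j := by
      intro y hy
      by_cases h0 : l1 (y - x) ≤ 0
      · exact Or.inl h0
      push_neg at h0
      right
      have hex : ∃ j : ℕ, r * (2:ℝ) ^ (-(j:ℝ) - 1) < l1 (y - x) := by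
        obtain ⟨n, hn⟩ := exists_pow_lt_of_lt_one (div_pos h0 hr) (by norm_num : (2:ℝ)⁻¹ < 1)
        refine ⟨n, ?_⟩
        have h1 : (2:ℝ) ^ (-(n:ℝ) - 1) ≤ (2:ℝ) ^ (-(n:ℝ)) :=
          Real.rpow_le_rpow_of_exponent_le (by norm_num) (by linarith)
        have h2 : (2:ℝ) ^ (-(n:ℝ)) = (2:ℝ)⁻¹ ^ n := by
          rw [Real.rpow_neg (by norm_num), Real.rpow_natCast, inv_pow]
        have h3 : r * (2:ℝ)⁻¹ ^ n < l1 (y - x) := by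
          have := (mul_lt_mul_of_pos_left hn hr)
          rwa [mul_div_cancel₀ _ hr.ne'] at this
        calc r * (2:ℝ) ^ (-(n:ℝ) - 1) ≤ r * (2:ℝ) ^ (-(n:ℝ)) :=
              mul_le_mul_of_nonneg_left h1 hr.le
          _ = r * (2:ℝ)⁻¹ ^ n := by rw [h2]
          _ < l1 (y - x) := h3
      have hspec : r * (2:ℝ) ^ (-((Nat.find hex : ℕ):ℝ) - 1) < l1 (y - x) := Nat.find_spec hex
      refine Set.mem_iUnion.2 ⟨Nat.find hex, hspec, ?_⟩
      rcases Nat.eq_zero_or_pos (Nat.find hex) with hJ0 | hJ0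
      · rw [hJ0]
        simpa using hy
      · have hmin : ¬ (r * (2:ℝ) ^ (-((Nat.find hex - 1 : ℕ):ℝ) - 1) < l1 (y - x)) :=
          Nat.find_min hex (by omega)
        push_neg at hmin
        have hcast : -(((Nat.find hex - 1 : ℕ)):ℝ) - 1 = -((Nat.find hex : ℕ):ℝ) := by
          have : ((Nat.find hex - 1 : ℕ):ℝ) = ((Nat.find hex : ℕ):ℝ) - 1 := by
            rw [Nat.cast_sub hJ0]; norm_num
          rw [this]; ring
        rwa [hcast] at hmin
    have hSm : ∀ j, MeasurableSet (S j) := by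
      intro j
      apply MeasurableSet.inter
      · exact measurableSet_lt measurable_const
          (continuous_l1.comp (continuous_id.sub continuous_const)).measurable
      · exact measurableSet_le
          (continuous_l1.comp (continuous_id.sub continuous_const)).measurable
          measurable_const
    -- null part
    have hnull : volume {y : Fin d → ℝ | l1 (y - x) ≤ 0} = 0 := by
      refine le_antisymm ?_ (zero_le)
      calc volume {y : Fin d → ℝ | l1 (y - x) ≤ 0} ≤ ENNReal.ofReal ((2 * 0) ^ d) :=
            vol_l1ball_le x 0 le_rfl
        _ = 0 := by
            rw [mul_zero, zero_pow (by omega), ENNReal.ofReal_zero]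
    -- per-shell bound
    have hshell : ∀ j : ℕ, ∫⁻ y in S j, ENNReal.ofReal (l1 (y - x) ^ q)
        ≤ ENNReal.ofReal ((2:ℝ) ^ ((d:ℝ) - q) * r ^ ((d:ℝ) + q)) * ENNReal.ofReal ρ ^ j := by
      intro j
      have hrj : (0:ℝ) < r * (2:ℝ) ^ (-(j:ℝ) - 1) :=
        mul_pos hr (Real.rpow_pos_of_pos (by norm_num) _)
      calc ∫⁻ y in S j, ENNReal.ofReal (l1 (y - x) ^ q)
          ≤ ∫⁻ _y in S j, ENNReal.ofReal ((r * (2:ℝ) ^ (-(j:ℝ) - 1)) ^ q) := by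
            refine setLIntegral_mono' (hSm j) fun y hy => ?_
            exact ENNReal.ofReal_le_ofReal
              (Real.rpow_le_rpow_of_nonpos hrj hy.1.le hq0.le)
        _ = ENNReal.ofReal ((r * (2:ℝ) ^ (-(j:ℝ) - 1)) ^ q) * volume (S j) :=
            setLIntegral_const _ _
        _ ≤ ENNReal.ofReal ((r * (2:ℝ) ^ (-(j:ℝ) - 1)) ^ q)
              * ENNReal.ofReal ((2 * (r * (2:ℝ) ^ (-(j:ℝ)))) ^ d) := by
            refine mul_le_mul_right ?_ _
            refine (measure_mono ?_).trans (vol_l1ball_le x (r * (2:ℝ) ^ (-(j:ℝ)))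
              (by positivity))
            exact fun y hy => hy.2
        _ = ENNReal.ofReal ((2:ℝ) ^ ((d:ℝ) - q) * r ^ ((d:ℝ) + q)) * ENNReal.ofReal ρ ^ j := by
            rw [← ENNReal.ofReal_pow hρpos.le, ← ENNReal.ofReal_mul (by positivity),
              ← ENNReal.ofReal_mul (by positivity)]
            congr 1
            have e1 : (r * (2:ℝ) ^ (-(j:ℝ) - 1)) ^ q
                = r ^ q * (2:ℝ) ^ ((-(j:ℝ) - 1) * q) := by
              rw [Real.mul_rpow hr.le (Real.rpow_pos_of_pos (by norm_num) _).le,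
                ← Real.rpow_mul (by norm_num : (0:ℝ) ≤ 2)]
            have e2 : ((2 * (r * (2:ℝ) ^ (-(j:ℝ)))) : ℝ) ^ d
                = (2 * (r * (2:ℝ) ^ (-(j:ℝ)))) ^ (d:ℝ) := by
              rw [Real.rpow_natCast]
            have e3 : ((2 * (r * (2:ℝ) ^ (-(j:ℝ)))) : ℝ) ^ (d:ℝ)
                = 2 ^ (d:ℝ) * (r ^ (d:ℝ) * (2:ℝ) ^ (-(j:ℝ) * d)) := by
              rw [Real.mul_rpow (by norm_num) (by positivity),
                Real.mul_rpow hr.le (Real.rpow_pos_of_pos (by norm_num) _).le,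
                ← Real.rpow_mul (by norm_num : (0:ℝ) ≤ 2)]
            have e4 : ρ ^ j = (2:ℝ) ^ ((-(d:ℝ) - q) * j) := by
              rw [hρ, ← Real.rpow_natCast ((2:ℝ) ^ (-(d:ℝ) - q)) j,
                ← Real.rpow_mul (by norm_num : (0:ℝ) ≤ 2)]
            rw [e1, e2, e3, e4]
            rw [show r ^ q * (2:ℝ) ^ ((-(j:ℝ) - 1) * q)
                  * ((2:ℝ) ^ (d:ℝ) * (r ^ (d:ℝ) * (2:ℝ) ^ (-(j:ℝ) * (d:ℝ))))
                = ((2:ℝ) ^ ((-(j:ℝ) - 1) * q) * ((2:ℝ) ^ (d:ℝ) * (2:ℝ) ^ (-(j:ℝ) * (d:ℝ))))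
                  * (r ^ q * r ^ (d:ℝ)) from by ring,
              show (2:ℝ) ^ ((d:ℝ) - q) * r ^ ((d:ℝ) + q) * (2:ℝ) ^ ((-(d:ℝ) - q) * (j:ℝ))
                  = ((2:ℝ) ^ ((d:ℝ) - q) * (2:ℝ) ^ ((-(d:ℝ) - q) * (j:ℝ)))
                    * r ^ ((d:ℝ) + q) from by ring,
              ← Real.rpow_add (by norm_num : (0:ℝ) < 2),
              ← Real.rpow_add (by norm_num : (0:ℝ) < 2),
              ← Real.rpow_add (by norm_num : (0:ℝ) < 2),
              ← Real.rpow_add hr]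
            congr 1
            · congr 1
              ring
            · congr 1
              ring
    calc ∫⁻ y in {y : Fin d → ℝ | l1 (y - x) ≤ r}, ENNReal.ofReal (l1 (y - x) ^ q)
        ≤ ∫⁻ y in {y : Fin d → ℝ | l1 (y - x) ≤ 0} ∪ ⋃ j, S j,
            ENNReal.ofReal (l1 (y - x) ^ q) := lintegral_mono_set hcover
      _ ≤ (∫⁻ y in {y : Fin d → ℝ | l1 (y - x) ≤ 0}, ENNReal.ofReal (l1 (y - x) ^ q))
            + ∫⁻ y in ⋃ j, S j, ENNReal.ofReal (l1 (y - x) ^ q) := lintegral_union_le _ _ _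
      _ ≤ 0 + ∑' j, ∫⁻ y in S j, ENNReal.ofReal (l1 (y - x) ^ q) := by
          gcongr
          · rw [setLIntegral_measure_zero _ _ hnull]
          · exact lintegral_iUnion_le _ _
      _ ≤ 0 + ∑' j, ENNReal.ofReal ((2:ℝ) ^ ((d:ℝ) - q) * r ^ ((d:ℝ) + q))
            * ENNReal.ofReal ρ ^ j := by
          gcongr
          exact hshell _
      _ = ENNReal.ofReal ((2:ℝ) ^ ((d:ℝ) - q)) * ((1:ℝ≥0∞) - ENNReal.ofReal ρ)⁻¹
            * ENNReal.ofReal (r ^ ((d:ℝ) + q)) := by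
          rw [zero_add, ENNReal.tsum_mul_left, ENNReal.tsum_geometric,
            ENNReal.ofReal_mul (by positivity)]
          ring
end JB

section WT

lemma tsum_pi_prod : ∀ (d : ℕ) (h : ℤ → ℝ≥0∞),
    ∑' z : Fin d → ℤ, ∏ i, h (z i) = (∑' m : ℤ, h m) ^ d := by
  intro d
  induction d with
  | zero =>
    intro h
    rw [pow_zero]
    have : ∀ z : Fin 0 → ℤ, (∏ i, h (z i)) = 1 := fun z => by simp
    rw [tsum_congr this]
    exact tsum_eq_single (default) fun b hb => absurd (Subsingleton.elim b default) hb
  | succ d ih =>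
    intro h
    rw [← (Fin.consEquiv (fun _ : Fin (d+1) => ℤ)).tsum_eq fun z => ∏ i, h (z i)]
    have hterm : ∀ p : ℤ × (Fin d → ℤ),
        (∏ i, h ((Fin.consEquiv (fun _ : Fin (d+1) => ℤ)) p i))
          = h p.1 * ∏ i : Fin d, h (p.2 i) := by
      intro p
      rw [Fin.prod_univ_succ]
      simp [Fin.consEquiv]
    rw [tsum_congr hterm, ENNReal.tsum_prod']
    rw [tsum_congr fun a => ENNReal.tsum_mul_left (a := h a)]
    have hin : ∀ b : ℤ, (∑' z : Fin d → ℤ, ∏ i : Fin d, h ((b, z).2 i))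
        = (∑' m : ℤ, h m) ^ d := fun b => ih h
    rw [tsum_congr fun b => by rw [hin b], ENNReal.tsum_mul_right, pow_succ]
    ring

lemma zsum_weight_lt_top {ε : ℝ} (hε : 0 < ε) :
    (∑' m : ℤ, ENNReal.ofReal ((1 + |(m:ℝ)|) ^ (-(1+ε)))) < ⊤ := by
  set g : ℤ → ℝ := fun m => (1 + |(m:ℝ)|) ^ (-(1+ε)) with hg
  have hgnn : ∀ m, 0 ≤ g m := fun m => Real.rpow_nonneg (by positivity) _
  have hb : (1:ℝ) < 1 + ε := by linarith
  have hs1 : Summable fun m : ℤ => |(m:ℝ)| ^ (-(1+ε)) := Real.summable_abs_int_rpow hb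
  have hs2 : Summable fun m : ℤ => if m = 0 then (1:ℝ) else 0 :=
    (hasSum_ite_eq (0:ℤ) (1:ℝ)).summable
  have hcomp : ∀ m : ℤ, g m ≤ |(m:ℝ)| ^ (-(1+ε)) + (if m = 0 then (1:ℝ) else 0) := by
    intro m
    by_cases hm : m = 0
    · subst hm
      have h1 : g 0 = 1 := by
        show ((1:ℝ) + |((0:ℤ):ℝ)|) ^ (-(1+ε)) = 1
        norm_num [Real.one_rpow]
      rw [h1, if_pos rfl]
      have h2 : (0:ℝ) ≤ |((0:ℤ):ℝ)| ^ (-(1+ε)) := Real.rpow_nonneg (abs_nonneg _) _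
      linarith
    · have h0 : (0:ℝ) < |(m:ℝ)| := by
        simp only [abs_pos]
        exact_mod_cast hm
      have : g m ≤ |(m:ℝ)| ^ (-(1+ε)) :=
        Real.rpow_le_rpow_of_nonpos h0 (by linarith [abs_nonneg (m:ℝ)]) (by linarith)
      simp only [if_neg hm, add_zero]
      exact this
  have hsum : Summable g := Summable.of_nonneg_of_le hgnn hcomp (hs1.add hs2)
  calc (∑' m : ℤ, ENNReal.ofReal (g m)) = ENNReal.ofReal (∑' m, g m) :=
        (ENNReal.ofReal_tsum_of_nonneg hgnn hsum).symm
    _ < ⊤ := ENNReal.ofReal_lt_top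

end WT


set_option maxHeartbeats 2000000 in
theorem statement7 {Ω : Type*} [MeasurableSpace Ω] (d : ℕ) (hd : 1 ≤ d)
    (P : Measure Ω) [IsProbabilityMeasure P]
    (T : (Fin d → ℤ) → Ω → Ω)
    (hT0 : T 0 = id)
    (hTadd : ∀ x y, T (x + y) = T x ∘ T y)
    (hTmeas : ∀ x, Measurable (T x))
    (hTmp : ∀ x, MeasurePreserving (T x) P P)
    (herg : ∀ A : Set Ω, MeasurableSet A →
      (∀ σ : Step d, T (vec σ) ⁻¹' A = A) → P A = 0 ∨ P A = 1)
    (F : Ω → Step d → ℝ) (hF : MemK d P T F)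
    (α : ℝ) (hα : 0 < α)
    (hFmom : ∀ σ, Integrable (fun ω => |F ω σ| ^ ((d : ℝ) + α)) P)
    :
    ∀ᵐ ω ∂P, ∀ f : (Fin d → ℤ) → ℝ,
      f 0 = 0 → (∀ z σ, f (z + vec σ) = f z + F (T z ω) σ) →
      ∀ γ : ℝ, 2 * d < γ → γ < 2 * d + α / 2 →
      ∃ c : ℝ≥0∞, c ≠ ⊤ ∧
        Tendsto (fun n : ℕ =>
          ∫⁻ x in {x : Fin d → ℝ | l1 x ≤ 1},
            ∫⁻ y in {y : Fin d → ℝ | l1 (y - x) ≤ 2 * d / n} ∩ {y : Fin d → ℝ | l1 y ≤ 1},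
              ENNReal.ofReal
                (|gseq f n y - gseq f n x| ^ ((d : ℝ) + α / 2) / l1 (y - x) ^ γ))
          atTop (nhds c) := by
  classical
  set p : ℝ := (d : ℝ) + α / 2 with hp
  have hd0 : (0:ℝ) < d := by exact_mod_cast hd
  have hp0 : (0:ℝ) < p := by rw [hp]; positivity
  have hpda : p ≤ (d:ℝ) + α := by rw [hp]; linarith
  -- the basic integrable weight function
  set Gl : Ω → ℝ≥0∞ := fun ω' => ∑ σ : Step d, ENNReal.ofReal (|F ω' σ| ^ p) with hGl
  have hm1 : ∀ σ : Step d, Measurable fun ω' => ENNReal.ofReal (|F ω' σ| ^ p) :=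
    fun σ => ENNReal.measurable_ofReal.comp
      ((Real.continuous_rpow_const hp0.le).measurable.comp (hF.1 σ).abs)
  have hGlmeas : Measurable Gl := by
    rw [hGl]
    exact Finset.measurable_sum _ fun σ _ => hm1 σ
  have hGlint : ∫⁻ ω', Gl ω' ∂P ≠ ⊤ := by
    have hsum : ∫⁻ ω', Gl ω' ∂P = ∑ σ : Step d, ∫⁻ ω', ENNReal.ofReal (|F ω' σ| ^ p) ∂P := by
      rw [hGl]
      exact lintegral_finset_sum _ (fun σ _ => hm1 σ)
    rw [hsum]
    refine (ENNReal.sum_lt_top.2 fun σ _ => ?_).ne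
    have hptw : ∀ ω', ENNReal.ofReal (|F ω' σ| ^ p)
        ≤ 1 + ENNReal.ofReal (|F ω' σ| ^ ((d:ℝ) + α)) := by
      intro ω'
      rcases le_total (|F ω' σ|) 1 with h1 | h1
      · refine le_trans ?_ le_self_add
        rw [← ENNReal.ofReal_one]
        exact ENNReal.ofReal_le_ofReal (Real.rpow_le_one (abs_nonneg _) h1 hp0.le)
      · refine le_trans ?_ le_add_self
        exact ENNReal.ofReal_le_ofReal (Real.rpow_le_rpow_of_exponent_le h1 hpda)
    calc ∫⁻ ω', ENNReal.ofReal (|F ω' σ| ^ p) ∂P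
        ≤ ∫⁻ ω', (1 + ENNReal.ofReal (|F ω' σ| ^ ((d:ℝ) + α))) ∂P := lintegral_mono hptw
      _ = ∫⁻ _ω', (1:ℝ≥0∞) ∂P + ∫⁻ ω', ENNReal.ofReal (|F ω' σ| ^ ((d:ℝ) + α)) ∂P :=
          lintegral_add_left measurable_const _
      _ < ⊤ := by
          refine ENNReal.add_lt_top.2 ⟨?_, ?_⟩
          · rw [lintegral_const, one_mul]
            exact measure_lt_top P _
          · refine lt_of_le_of_lt (lintegral_mono fun ω' => ?_) (hFmom σ).2
            exact le_trans (ENNReal.ofReal_le_ofReal (le_abs_self _))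
              (Real.enorm_eq_ofReal_abs _).ge
  -- weights
  set wt : ℕ → (Fin d → ℤ) → ℝ≥0∞ := fun k z =>
    ∏ i, ENNReal.ofReal ((1 + |((z i : ℤ) : ℝ)|) ^ (-(1 + 1/((k:ℝ)+1)))) with hwt
  have hwtne : ∀ k z, wt k z ≠ ⊤ := by
    intro k z
    rw [hwt]
    exact (ENNReal.prod_lt_top fun _ _ => ENNReal.ofReal_lt_top).ne
  set W : ℕ → Ω → ℝ≥0∞ := fun k ω' => ∑' z : Fin d → ℤ, wt k z * Gl (T z ω') with hW
  have hWfin : ∀ᵐ ω' ∂P, ∀ k : ℕ, W k ω' < ⊤ := by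
    rw [ae_all_iff]
    intro k
    have hm2 : ∀ z : Fin d → ℤ, Measurable fun ω' => wt k z * Gl (T z ω') :=
      fun z => (hGlmeas.comp (hTmeas z)).const_mul _
    refine ae_lt_top (Measurable.ennreal_tsum hm2) ?_
    have hsum2 : ∫⁻ ω', W k ω' ∂P = ∑' z : Fin d → ℤ, ∫⁻ ω', wt k z * Gl (T z ω') ∂P := by
      rw [hW]
      exact lintegral_tsum fun z => (hm2 z).aemeasurable
    rw [hsum2]
    have hz : ∀ z : Fin d → ℤ, ∫⁻ ω', wt k z * Gl (T z ω') ∂P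
        = wt k z * ∫⁻ ω', Gl ω' ∂P := by
      intro z
      rw [lintegral_const_mul' _ _ (hwtne k z), (hTmp z).lintegral_comp hGlmeas]
    rw [tsum_congr hz, ENNReal.tsum_mul_right]
    refine ENNReal.mul_ne_top ?_ hGlint
    have hfact : (∑' z : Fin d → ℤ, wt k z)
        = (∑' m : ℤ, ENNReal.ofReal ((1 + |(m : ℝ)|) ^ (-(1 + 1/((k:ℝ)+1))))) ^ d := by
      rw [hwt]
      exact tsum_pi_prod d (fun m => ENNReal.ofReal ((1 + |(m : ℝ)|) ^ (-(1 + 1/((k:ℝ)+1)))))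
    rw [hfact]
    exact ENNReal.pow_ne_top (zsum_weight_lt_top (by positivity)).ne
  filter_upwards [hWfin] with ω hWω
  intro f hf0 hfinc γ hγ1 hγ2
  -- exponents
  set q : ℝ := p - γ with hq
  have hqd : -(d:ℝ) < q := by rw [hq, hp]; linarith
  have hδpos : (0:ℝ) < (d:ℝ) + q := by linarith
  obtain ⟨C, hCne, hC⟩ := Jbound hd q hqd
  obtain ⟨k, hk⟩ := exists_nat_one_div_lt (div_pos hδpos hd0)
  set ε : ℝ := 1/((k:ℝ)+1) with hε
  have hε0 : 0 < ε := by rw [hε]; positivity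
  have hεd : ε * (d:ℝ) < (d:ℝ) + q := by
    have h1 : ε < ((d:ℝ)+q)/(d:ℝ) := hk
    calc ε * (d:ℝ) < (((d:ℝ)+q)/(d:ℝ)) * (d:ℝ) := mul_lt_mul_of_pos_right h1 hd0
      _ = (d:ℝ) + q := by field_simp
  set δ' : ℝ := (d:ℝ) + q - ε * d with hδ'
  have hδ'0 : 0 < δ' := by rw [hδ']; linarith
  have hWkne : W k ω ≠ ⊤ := (hWω k).ne
  set CW : ℝ≥0∞ := C * W k ω with hCW
  have hCWne : CW ≠ ⊤ := ENNReal.mul_ne_top hCne hWkne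
  set D : ℝ := (2*(d:ℝ)) ^ ((d:ℝ)+q) * ((4*(d:ℝ)+5) ^ d) * (2:ℝ) ^ ((1+ε) * (d:ℝ)) with hD
  refine ⟨0, by simp, ?_⟩
  -- the upper bounding sequence tends to 0
  have hupper : Tendsto (fun n : ℕ => CW * ENNReal.ofReal (D * (n:ℝ) ^ (-δ'))) atTop (nhds 0) := by
    have h1 : Tendsto (fun n : ℕ => D * (n:ℝ) ^ (-δ')) atTop (nhds 0) := by
      have h0 := (tendsto_rpow_neg_atTop hδ'0).comp (tendsto_natCast_atTop_atTop (R := ℝ))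
      have := h0.const_mul D
      rwa [mul_zero] at this
    have h2 := ENNReal.tendsto_ofReal h1
    rw [ENNReal.ofReal_zero] at h2
    have h3 := ENNReal.Tendsto.const_mul (a := CW) h2 (Or.inr hCWne)
    rwa [mul_zero] at h3
  refine tendsto_of_tendsto_of_tendsto_of_le_of_le' tendsto_const_nhds hupper
    (Eventually.of_forall fun n => zero_le) ?_
  have MAIN : ∀ n : ℕ, 1 ≤ n → (2*(d:ℝ)+4) ≤ (n:ℝ) →
      (∫⁻ x in {x : Fin d → ℝ | l1 x ≤ 1},
        ∫⁻ y in {y : Fin d → ℝ | l1 (y - x) ≤ 2 * d / n} ∩ {y : Fin d → ℝ | l1 y ≤ 1},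
          ENNReal.ofReal
            (|gseq f n y - gseq f n x| ^ ((d : ℝ) + α / 2) / l1 (y - x) ^ γ))
        ≤ CW * ENNReal.ofReal (D * (n:ℝ) ^ (-δ')) := by
    intro n hn1 hn2
    have hnR : (0:ℝ) < n := by
      have : (1:ℝ) ≤ (n:ℝ) := by exact_mod_cast hn1
      linarith
    set r : ℝ := 2*(d:ℝ)/n with hr'
    have hr : 0 < r := by rw [hr']; positivity
    set inB : (Fin d → ℝ) → (Fin d → ℤ) → Prop := fun x w =>
      ∀ i, ⌊(n:ℝ) * x i⌋ - (2*(d:ℤ)+2) ≤ w i ∧ w i ≤ ⌊(n:ℝ) * x i⌋ + (2*(d:ℤ)+2) with hinB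
    set S : (Fin d → ℝ) → ℝ≥0∞ := fun x => ∑' w : Fin d → ℤ,
      (if inB x w then Gl (T w ω) else 0) with hS
    set Kf : (Fin d → ℝ) → ℝ := fun x => (S x).toReal ^ (1/p) with hKf
    set Nr : ℝ := (n:ℝ) + 2*(d:ℝ) + 3 with hNr
    have hNr0 : 0 < 1 + Nr := by rw [hNr]; positivity
    set Mn : ℝ≥0∞ := (ENNReal.ofReal ((1 + Nr) ^ (1+ε)))^d with hMn
    have hMnne : Mn ≠ ⊤ := by
      rw [hMn]
      exact ENNReal.pow_ne_top ENNReal.ofReal_ne_top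
    have hfloor_bound : ∀ x : Fin d → ℝ, l1 x ≤ 1 →
        ∀ i, -(n:ℤ) ≤ ⌊(n:ℝ) * x i⌋ ∧ ⌊(n:ℝ) * x i⌋ ≤ (n:ℤ) := by
      intro x hx i
      have h1 : |x i| ≤ 1 := (abs_le_l1 x i).trans hx
      have h2 := abs_le.1 h1
      constructor
      · rw [Int.le_floor]
        push_cast
        nlinarith [h2.1]
      · have h3 : (n:ℝ) * x i ≤ (((n:ℤ)):ℝ) := by push_cast; nlinarith [h2.2]
        calc ⌊(n:ℝ) * x i⌋ ≤ ⌊(((n:ℤ)):ℝ)⌋ := Int.floor_le_floor h3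
          _ = (n:ℤ) := Int.floor_intCast _
    have hbig : ∀ x : Fin d → ℝ, l1 x ≤ 1 → ∀ w : Fin d → ℤ, inB x w →
        ∀ i, |w i| ≤ (n:ℤ) + 2*(d:ℤ) + 3 := by
      intro x hx w hw i
      have h1 := hfloor_bound x hx i
      have h2 := hw i
      rw [abs_le]
      omega
    have hwcmp : ∀ w : Fin d → ℤ, (∀ i, |w i| ≤ (n:ℤ) + 2*(d:ℤ) + 3) →
        Gl (T w ω) ≤ Mn * (wt k w * Gl (T w ω)) := by
      intro w hwB
      have hone : (1:ℝ≥0∞) ≤ Mn * wt k w := by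
        have hMne : Mn = ∏ _i : Fin d, ENNReal.ofReal ((1 + Nr) ^ (1+ε)) := by
          rw [hMn, Finset.prod_const, Finset.card_univ, Fintype.card_fin]
        rw [hMne, hwt, ← Finset.prod_mul_distrib]
        refine Finset.one_le_prod' fun i _ => ?_
        have hb1 : (0:ℝ) < 1 + |((w i : ℤ):ℝ)| := by positivity
        have hb2 : 1 + |((w i : ℤ):ℝ)| ≤ 1 + Nr := by
          have h3 : |((w i : ℤ):ℝ)| = ((|w i| : ℤ):ℝ) := by
            rw [Int.cast_abs]
          have h4 : ((|w i| : ℤ):ℝ) ≤ (((n:ℤ) + 2*(d:ℤ) + 3 : ℤ):ℝ) := by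
            exact_mod_cast hwB i
          rw [h3, hNr]
          push_cast at h4 ⊢
          linarith
        rw [← ENNReal.ofReal_mul (Real.rpow_nonneg hNr0.le _), ← ENNReal.ofReal_one]
        refine ENNReal.ofReal_le_ofReal ?_
        calc (1:ℝ) = (1 + |((w i : ℤ):ℝ)|) ^ (1+ε) * (1 + |((w i : ℤ):ℝ)|) ^ (-(1+ε)) := by
              rw [← Real.rpow_add hb1, show (1+ε) + -(1+ε) = (0:ℝ) from by ring,
                Real.rpow_zero]
          _ ≤ (1 + Nr) ^ (1+ε) * (1 + |((w i : ℤ):ℝ)|) ^ (-(1+ε)) := by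
              refine mul_le_mul_of_nonneg_right ?_ (Real.rpow_nonneg hb1.le _)
              exact Real.rpow_le_rpow hb1.le hb2 (by positivity)
          _ = (1 + Nr) ^ (1+ε) * (1 + |((w i : ℤ):ℝ)|) ^ (-(1 + 1/((k:ℝ)+1))) := by
              rw [hε]
      calc Gl (T w ω) = 1 * Gl (T w ω) := (one_mul _).symm
        _ ≤ (Mn * wt k w) * Gl (T w ω) := mul_le_mul_left hone _
        _ = Mn * (wt k w * Gl (T w ω)) := mul_assoc _ _ _
    have hScmp : ∀ x : Fin d → ℝ, l1 x ≤ 1 → S x ≤ Mn * W k ω := by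
      intro x hx
      rw [hS]
      calc (∑' w : Fin d → ℤ, (if inB x w then Gl (T w ω) else 0))
          ≤ ∑' w : Fin d → ℤ, Mn * (wt k w * Gl (T w ω)) := by
            refine ENNReal.tsum_le_tsum fun w => ?_
            by_cases hw : inB x w
            · rw [if_pos hw]
              exact hwcmp w (hbig x hx w hw)
            · rw [if_neg hw]
              exact zero_le
        _ = Mn * W k ω := by rw [ENNReal.tsum_mul_left, hW]
    have hSfin : ∀ x : Fin d → ℝ, l1 x ≤ 1 → S x ≠ ⊤ := by
      intro x hx
      exact ((hScmp x hx).trans_lt (ENNReal.mul_lt_top hMnne.lt_top (hWω k))).ne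
    have hK0 : ∀ x, 0 ≤ Kf x := fun x => Real.rpow_nonneg ENNReal.toReal_nonneg _
    have hofK : ∀ x : Fin d → ℝ, l1 x ≤ 1 → ENNReal.ofReal (Kf x ^ p) = S x := by
      intro x hx
      rw [hKf]
      simp only
      rw [← Real.rpow_mul ENNReal.toReal_nonneg, one_div_mul_cancel hp0.ne', Real.rpow_one,
        ENNReal.ofReal_toReal (hSfin x hx)]
    have hFb : ∀ x : Fin d → ℝ, l1 x ≤ 1 → ∀ w : Fin d → ℤ,
        (∀ j, ⌊(n:ℝ) * x j⌋ - (2*(d:ℤ)+2) ≤ w j ∧ w j ≤ ⌊(n:ℝ) * x j⌋ + (2*(d:ℤ)+2)) →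
        ∀ i : Fin d, |f (w + unitv i) - f w| ≤ Kf x := by
      intro x hx w hw i
      have hv : vec ((i, true) : Step d) = unitv i := by
        funext j
        simp [vec, unitv]
      have hincr : f (w + unitv i) - f w = F (T w ω) (i, true) := by
        rw [← hv, hfinc w (i, true)]
        ring
      have h1 : ENNReal.ofReal (|F (T w ω) (i, true)| ^ p) ≤ S x := by
        have h1a : ENNReal.ofReal (|F (T w ω) (i, true)| ^ p) ≤ Gl (T w ω) :=
          Finset.single_le_sum (f := fun σ => ENNReal.ofReal (|F (T w ω) σ| ^ p))
            (fun _ _ => zero_le) (Finset.mem_univ ((i, true) : Step d))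
        refine h1a.trans ?_
        have h1b : Gl (T w ω) = (if inB x w then Gl (T w ω) else 0) := by
          rw [if_pos (show inB x w from hw)]
        rw [hS, h1b]
        exact ENNReal.le_tsum w
      have h2 : |F (T w ω) (i, true)| ^ p ≤ (S x).toReal := by
        have h2a := ENNReal.toReal_mono (hSfin x hx) h1
        rwa [ENNReal.toReal_ofReal (by positivity)] at h2a
      calc |f (w + unitv i) - f w| = |F (T w ω) (i, true)| := by rw [hincr]
        _ = (|F (T w ω) (i, true)| ^ p) ^ (1/p) := by
            rw [← Real.rpow_mul (abs_nonneg _), mul_one_div_cancel hp0.ne', Real.rpow_one]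
        _ ≤ Kf x := Real.rpow_le_rpow (by positivity) h2 (by positivity)
    have hlip : ∀ x : Fin d → ℝ, l1 x ≤ 1 → ∀ y : Fin d → ℝ, l1 (y - x) ≤ r →
        |gseq f n y - gseq f n x| ≤ Kf x * l1 (y - x) := by
      intro x hx y hyr
      have hyd : ∀ i, |(n:ℝ) * y i - (n:ℝ) * x i| ≤ 2*(d:ℝ) := by
        intro i
        have h1 : |y i - x i| ≤ l1 (y - x) := by
          have h1a := abs_le_l1 (y - x) i
          simpa using h1a
        have h2 : |(n:ℝ) * y i - (n:ℝ) * x i| = (n:ℝ) * |y i - x i| := by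
          rw [← mul_sub, abs_mul, abs_of_nonneg hnR.le]
        rw [h2]
        calc (n:ℝ) * |y i - x i| ≤ (n:ℝ) * r :=
              mul_le_mul_of_nonneg_left (h1.trans hyr) hnR.le
          _ = 2*(d:ℝ) := by rw [hr']; field_simp
      have hcorn : ∀ i, ⌊(n:ℝ)*x i⌋ - (2*(d:ℤ)+2) ≤ ⌊(n:ℝ)*y i⌋ ∧
          ⌊(n:ℝ)*y i⌋ + 1 ≤ ⌊(n:ℝ)*x i⌋ + (2*(d:ℤ)+2) := by
        intro i
        have h3 := abs_le.1 (hyd i)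
        have h4 : ⌊(n:ℝ)*y i⌋ ≤ ⌊(n:ℝ)*x i⌋ + 2*(d:ℤ) := by
          have h4a : (n:ℝ)*y i ≤ (n:ℝ)*x i + ((2*(d:ℤ) : ℤ):ℝ) := by
            push_cast
            linarith [h3.2]
          calc ⌊(n:ℝ)*y i⌋ ≤ ⌊(n:ℝ)*x i + ((2*(d:ℤ) : ℤ):ℝ)⌋ := Int.floor_le_floor h4a
            _ = ⌊(n:ℝ)*x i⌋ + 2*(d:ℤ) := Int.floor_add_intCast _ _
        have h5 : ⌊(n:ℝ)*x i⌋ - 2*(d:ℤ) ≤ ⌊(n:ℝ)*y i⌋ := by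
          have h5a : (n:ℝ)*x i + ((-(2*(d:ℤ)) : ℤ):ℝ) ≤ (n:ℝ)*y i := by
            push_cast
            linarith [h3.1]
          calc ⌊(n:ℝ)*x i⌋ - 2*(d:ℤ) = ⌊(n:ℝ)*x i + ((-(2*(d:ℤ)) : ℤ):ℝ)⌋ := by
                rw [Int.floor_add_intCast]
                ring
            _ ≤ ⌊(n:ℝ)*y i⌋ := Int.floor_le_floor h5a
        omega
      have hbox : |fhat f (fun i => (n:ℝ)*y i) - fhat f (fun i => (n:ℝ)*x i)|
          ≤ Kf x * l1 ((fun i => (n:ℝ)*y i) - fun i => (n:ℝ)*x i) := by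
        refine fhat_lip_box f (fun i => ⌊(n:ℝ)*x i⌋ - (2*(d:ℤ)+2))
          (fun i => ⌊(n:ℝ)*x i⌋ + (2*(d:ℤ)+2)) (Kf x) (hK0 x) ?_ _ _ ?_ ?_ ?_
        · intro i
          show ⌊(n:ℝ)*x i⌋ - (2*(d:ℤ)+2) ≤ ⌊(n:ℝ)*x i⌋ + (2*(d:ℤ)+2)
          omega
        · intro i
          show ⌊(n:ℝ)*x i⌋ - (2*(d:ℤ)+2) ≤ ⌊(n:ℝ)*x i⌋ ∧
            ⌊(n:ℝ)*x i⌋ + 1 ≤ ⌊(n:ℝ)*x i⌋ + (2*(d:ℤ)+2)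
          constructor <;> omega
        · intro i
          exact ⟨(hcorn i).1, (hcorn i).2⟩
        · intro w hw i
          exact hFb x hx w hw i
      have hgs : gseq f n y - gseq f n x
          = (fhat f (fun i => (n:ℝ)*y i) - fhat f (fun i => (n:ℝ)*x i))/n := by
        unfold gseq
        ring
      have hl1s : l1 ((fun i => (n:ℝ)*y i) - fun i => (n:ℝ)*x i) = (n:ℝ) * l1 (y - x) := by
        unfold l1
        rw [Finset.mul_sum]
        refine Finset.sum_congr rfl fun i _ => ?_
        simp only [Pi.sub_apply]
        rw [← mul_sub, abs_mul, abs_of_nonneg hnR.le]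
      rw [hgs, abs_div, abs_of_pos hnR]
      rw [hl1s] at hbox
      calc |fhat f (fun i => (n:ℝ)*y i) - fhat f (fun i => (n:ℝ)*x i)| / (n:ℝ)
          ≤ (Kf x * ((n:ℝ) * l1 (y - x))) / (n:ℝ) := by gcongr
        _ = Kf x * l1 (y - x) := by
            field_simp
    have hmeasB1 : MeasurableSet {v : Fin d → ℝ | l1 v ≤ 1} :=
      measurableSet_le continuous_l1.measurable measurable_const
    have hmeasreg : ∀ x : Fin d → ℝ, MeasurableSet
        ({y : Fin d → ℝ | l1 (y - x) ≤ r} ∩ {y : Fin d → ℝ | l1 y ≤ 1}) :=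
      fun x => (meas_l1ball x _).inter hmeasB1
    have hptw2 : ∀ x : Fin d → ℝ, l1 x ≤ 1 → ∀ y : Fin d → ℝ, l1 (y - x) ≤ r →
        ENNReal.ofReal (|gseq f n y - gseq f n x| ^ p / l1 (y - x) ^ γ)
          ≤ ENNReal.ofReal (Kf x ^ p) * ENNReal.ofReal (l1 (y - x) ^ q) := by
      intro x hx y hyr
      rcases eq_or_lt_of_le (l1_nonneg (y - x)) with h0 | h0
      · have hd1 : |gseq f n y - gseq f n x| = 0 := by
          have h1 := hlip x hx y hyr
          have h2 : Kf x * l1 (y - x) = 0 := by rw [← h0]; ring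
          have h3 := h1.trans h2.le
          linarith [abs_nonneg (gseq f n y - gseq f n x)]
        rw [hd1, Real.zero_rpow hp0.ne', zero_div, ENNReal.ofReal_zero]
        exact zero_le
      · have h1 : |gseq f n y - gseq f n x| ^ p ≤ (Kf x * l1 (y - x)) ^ p :=
          Real.rpow_le_rpow (abs_nonneg _) (hlip x hx y hyr) hp0.le
        have h2 : (Kf x * l1 (y - x)) ^ p = Kf x ^ p * l1 (y - x) ^ p :=
          Real.mul_rpow (hK0 x) (l1_nonneg _)
        have h3 : |gseq f n y - gseq f n x| ^ p / l1 (y - x) ^ γ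
            ≤ Kf x ^ p * l1 (y - x) ^ q := by
          calc |gseq f n y - gseq f n x| ^ p / l1 (y - x) ^ γ
              ≤ (Kf x ^ p * l1 (y - x) ^ p) / l1 (y - x) ^ γ := by
                rw [← h2]
                gcongr
            _ = Kf x ^ p * (l1 (y - x) ^ p / l1 (y - x) ^ γ) := by ring
            _ = Kf x ^ p * l1 (y - x) ^ q := by
                rw [← Real.rpow_sub h0, hq]
        calc ENNReal.ofReal (|gseq f n y - gseq f n x| ^ p / l1 (y - x) ^ γ)
            ≤ ENNReal.ofReal (Kf x ^ p * l1 (y - x) ^ q) := ENNReal.ofReal_le_ofReal h3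
          _ = ENNReal.ofReal (Kf x ^ p) * ENNReal.ofReal (l1 (y - x) ^ q) :=
              ENNReal.ofReal_mul (Real.rpow_nonneg (hK0 x) _)
    have hinner : ∀ x : Fin d → ℝ, l1 x ≤ 1 →
        (∫⁻ y in {y : Fin d → ℝ | l1 (y - x) ≤ r} ∩ {y : Fin d → ℝ | l1 y ≤ 1},
          ENNReal.ofReal (|gseq f n y - gseq f n x| ^ p / l1 (y - x) ^ γ))
          ≤ S x * (C * ENNReal.ofReal (r ^ ((d:ℝ) + q))) := by
      intro x hx
      calc (∫⁻ y in {y : Fin d → ℝ | l1 (y - x) ≤ r} ∩ {y : Fin d → ℝ | l1 y ≤ 1},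
            ENNReal.ofReal (|gseq f n y - gseq f n x| ^ p / l1 (y - x) ^ γ))
          ≤ ∫⁻ y in {y : Fin d → ℝ | l1 (y - x) ≤ r} ∩ {y : Fin d → ℝ | l1 y ≤ 1},
              ENNReal.ofReal (Kf x ^ p) * ENNReal.ofReal (l1 (y - x) ^ q) :=
            setLIntegral_mono' (hmeasreg x) fun y hy => hptw2 x hx y hy.1
        _ ≤ ∫⁻ y in {y : Fin d → ℝ | l1 (y - x) ≤ r},
              ENNReal.ofReal (Kf x ^ p) * ENNReal.ofReal (l1 (y - x) ^ q) :=
            lintegral_mono_set Set.inter_subset_left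
        _ = ENNReal.ofReal (Kf x ^ p)
              * ∫⁻ y in {y : Fin d → ℝ | l1 (y - x) ≤ r}, ENNReal.ofReal (l1 (y - x) ^ q) :=
            lintegral_const_mul' _ _ ENNReal.ofReal_ne_top
        _ ≤ ENNReal.ofReal (Kf x ^ p) * (C * ENNReal.ofReal (r ^ ((d:ℝ) + q))) :=
            mul_le_mul_right (hC x r hr) _
        _ = S x * (C * ENNReal.ofReal (r ^ ((d:ℝ) + q))) := by rw [hofK x hx]
    -- outer integral
    have hindif : ∀ w : Fin d → ℤ, (fun x : Fin d → ℝ => if inB x w then Gl (T w ω) else 0)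
        = Set.indicator {x : Fin d → ℝ | inB x w} (fun _ => Gl (T w ω)) := by
      intro w
      funext x
      rw [Set.indicator_apply]
      by_cases h : inB x w
      · rw [if_pos h, if_pos (show x ∈ {x : Fin d → ℝ | inB x w} from h)]
      · rw [if_neg h, if_neg (show x ∉ {x : Fin d → ℝ | inB x w} from h)]
    have hmeasw : ∀ w : Fin d → ℤ, MeasurableSet {x : Fin d → ℝ | inB x w} := by
      intro w
      have hset : {x : Fin d → ℝ | inB x w} = ⋂ i : Fin d,
          ((fun x : Fin d → ℝ => (n:ℝ) * x i) ⁻¹'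
            (Set.Ici (((w i - (2*(d:ℤ)+2) : ℤ)):ℝ) ∩ Set.Iio (((w i + (2*(d:ℤ)+2) + 1 : ℤ)):ℝ))) := by
        ext x
        simp only [Set.mem_setOf_eq, Set.mem_iInter, Set.mem_preimage, Set.mem_inter_iff,
          Set.mem_Ici, Set.mem_Iio]
        constructor
        · intro h i
          obtain ⟨h1, h2⟩ := h i
          constructor
          · have h3 : (w i - (2*(d:ℤ)+2)) ≤ ⌊(n:ℝ)*x i⌋ := by omega
            exact (Int.le_floor.1 h3)
          · have h4 : ⌊(n:ℝ)*x i⌋ < w i + (2*(d:ℤ)+2) + 1 := by omega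
            exact Int.floor_lt.1 h4
        · intro h i
          obtain ⟨h1, h2⟩ := h i
          have h3 : (w i - (2*(d:ℤ)+2)) ≤ ⌊(n:ℝ)*x i⌋ := Int.le_floor.2 h1
          have h4 : ⌊(n:ℝ)*x i⌋ < w i + (2*(d:ℤ)+2) + 1 := Int.floor_lt.2 h2
          omega
      rw [hset]
      refine MeasurableSet.iInter fun i => ?_
      exact ((measurable_pi_apply i).const_mul _) (measurableSet_Ici.inter measurableSet_Iio)
    have hmeasif : ∀ w : Fin d → ℤ,
        Measurable fun x : Fin d → ℝ => (if inB x w then Gl (T w ω) else 0) := by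
      intro w
      rw [hindif w]
      exact measurable_const.indicator (hmeasw w)
    set V : ℝ≥0∞ := ENNReal.ofReal (((4*(d:ℝ)+5)/n)^d) with hV
    have houter : (∫⁻ x in {x : Fin d → ℝ | l1 x ≤ 1}, S x) ≤ V * (Mn * W k ω) := by
      have hterm : ∀ w : Fin d → ℤ,
          (∫⁻ x in {x : Fin d → ℝ | l1 x ≤ 1}, (if inB x w then Gl (T w ω) else 0))
            ≤ (if (∀ i, |w i| ≤ (n:ℤ) + 2*(d:ℤ) + 3) then Gl (T w ω) else 0) * V := by
        intro w
        rw [show (∫⁻ x in {x : Fin d → ℝ | l1 x ≤ 1}, (if inB x w then Gl (T w ω) else 0))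
            = ∫⁻ x in {x : Fin d → ℝ | l1 x ≤ 1},
                Set.indicator {x : Fin d → ℝ | inB x w} (fun _ => Gl (T w ω)) x
            from by rw [← hindif w]]
        rw [lintegral_indicator (hmeasw w), Measure.restrict_restrict (hmeasw w),
          setLIntegral_const]
        by_cases hbb : (∀ i, |w i| ≤ (n:ℤ) + 2*(d:ℤ) + 3)
        · rw [if_pos hbb]
          refine mul_le_mul_right ?_ _
          have hsub : {x : Fin d → ℝ | inB x w} ⊆ Set.Icc
              (fun i => (((w i - (2*(d:ℤ)+2) : ℤ)):ℝ)/n)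
              (fun i => (((w i + (2*(d:ℤ)+2) + 1 : ℤ)):ℝ)/n) := by
            intro x hx
            constructor <;> intro i
            · obtain ⟨h1, h2⟩ := hx i
              have h3 : (((w i - (2*(d:ℤ)+2) : ℤ)):ℝ) ≤ (n:ℝ)*x i :=
                Int.le_floor.1 (by omega)
              simp only
              rw [div_le_iff₀ hnR]
              linarith [h3]
            · obtain ⟨h1, h2⟩ := hx i
              have h4 : (n:ℝ)*x i < (((w i + (2*(d:ℤ)+2) + 1 : ℤ)):ℝ) :=
                Int.floor_lt.1 (by omega)
              simp only
              rw [le_div_iff₀ hnR]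
              linarith [h4]
          calc volume ({x : Fin d → ℝ | inB x w} ∩ {x : Fin d → ℝ | l1 x ≤ 1})
              ≤ volume (Set.Icc (fun i => (((w i - (2*(d:ℤ)+2) : ℤ)):ℝ)/n)
                  (fun i => (((w i + (2*(d:ℤ)+2) + 1 : ℤ)):ℝ)/n)) :=
                measure_mono (Set.inter_subset_left.trans hsub)
            _ = ∏ _i : Fin d, ENNReal.ofReal ((4*(d:ℝ)+5)/n) := by
                rw [Real.volume_Icc_pi]
                refine Finset.prod_congr rfl fun i _ => ?_
                congr 1
                push_cast
                ring
            _ = V := by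
                rw [Finset.prod_const, Finset.card_univ, Fintype.card_fin, hV,
                  ENNReal.ofReal_pow (by positivity)]
        · rw [if_neg hbb, zero_mul]
          have hempty : {x : Fin d → ℝ | inB x w} ∩ {x : Fin d → ℝ | l1 x ≤ 1} = ∅ := by
            rw [Set.eq_empty_iff_forall_notMem]
            rintro x ⟨hx1, hx2⟩
            exact hbb (fun i => hbig x hx2 w hx1 i)
          rw [hempty, measure_empty, mul_zero]
      calc (∫⁻ x in {x : Fin d → ℝ | l1 x ≤ 1}, S x)
          = ∑' w : Fin d → ℤ, ∫⁻ x in {x : Fin d → ℝ | l1 x ≤ 1},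
              (if inB x w then Gl (T w ω) else 0) := by
            rw [hS]
            exact lintegral_tsum fun w => (hmeasif w).aemeasurable
        _ ≤ ∑' w : Fin d → ℤ,
              (if (∀ i, |w i| ≤ (n:ℤ) + 2*(d:ℤ) + 3) then Gl (T w ω) else 0) * V :=
            ENNReal.tsum_le_tsum hterm
        _ = (∑' w : Fin d → ℤ,
              (if (∀ i, |w i| ≤ (n:ℤ) + 2*(d:ℤ) + 3) then Gl (T w ω) else 0)) * V :=
            ENNReal.tsum_mul_right
        _ ≤ (Mn * W k ω) * V := by
            refine mul_le_mul_left ?_ _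
            calc (∑' w : Fin d → ℤ,
                  (if (∀ i, |w i| ≤ (n:ℤ) + 2*(d:ℤ) + 3) then Gl (T w ω) else 0))
                ≤ ∑' w : Fin d → ℤ, Mn * (wt k w * Gl (T w ω)) := by
                  refine ENNReal.tsum_le_tsum fun w => ?_
                  by_cases hw : (∀ i, |w i| ≤ (n:ℤ) + 2*(d:ℤ) + 3)
                  · rw [if_pos hw]
                    exact hwcmp w hw
                  · rw [if_neg hw]
                    exact zero_le
              _ = Mn * W k ω := by rw [ENNReal.tsum_mul_left, hW]
        _ = V * (Mn * W k ω) := mul_comm _ _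
    -- final assembly
    calc (∫⁻ x in {x : Fin d → ℝ | l1 x ≤ 1},
          ∫⁻ y in {y : Fin d → ℝ | l1 (y - x) ≤ r} ∩ {y : Fin d → ℝ | l1 y ≤ 1},
            ENNReal.ofReal (|gseq f n y - gseq f n x| ^ p / l1 (y - x) ^ γ))
        ≤ ∫⁻ x in {x : Fin d → ℝ | l1 x ≤ 1}, S x * (C * ENNReal.ofReal (r ^ ((d:ℝ) + q))) :=
          setLIntegral_mono' hmeasB1 fun x hx => hinner x hx
      _ = (C * ENNReal.ofReal (r ^ ((d:ℝ) + q))) * ∫⁻ x in {x : Fin d → ℝ | l1 x ≤ 1}, S x := by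
          rw [lintegral_congr fun x => mul_comm (S x) (C * ENNReal.ofReal (r ^ ((d:ℝ) + q)))]
          exact lintegral_const_mul' _ _ (ENNReal.mul_ne_top hCne ENNReal.ofReal_ne_top)
      _ ≤ (C * ENNReal.ofReal (r ^ ((d:ℝ) + q))) * (V * (Mn * W k ω)) :=
          mul_le_mul_right houter _
      _ = CW * (ENNReal.ofReal (r ^ ((d:ℝ) + q)) * (V * Mn)) := by
          rw [hCW]
          ring
      _ ≤ CW * ENNReal.ofReal (D * (n:ℝ) ^ (-δ')) := by
          refine mul_le_mul_right ?_ _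
          have hMn2 : Mn = ENNReal.ofReal (((1 + Nr) ^ (1+ε))^d) := by
            rw [hMn, ENNReal.ofReal_pow (Real.rpow_nonneg hNr0.le _)]
          rw [hMn2, hV, ← ENNReal.ofReal_mul (by positivity), ← ENNReal.ofReal_mul (by positivity)]
          refine ENNReal.ofReal_le_ofReal ?_
          -- real inequality
          have e1 : r ^ ((d:ℝ)+q) = (2*(d:ℝ)) ^ ((d:ℝ)+q) * (n:ℝ) ^ (-((d:ℝ)+q)) := by
            rw [hr', div_eq_mul_inv, Real.mul_rpow (by positivity) (by positivity),
              Real.inv_rpow hnR.le, ← Real.rpow_neg hnR.le]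
          have e2 : ((4*(d:ℝ)+5)/n)^d = (4*(d:ℝ)+5)^d * (n:ℝ) ^ (-(d:ℝ)) := by
            rw [div_pow, div_eq_mul_inv, ← Real.rpow_natCast (n:ℝ) d, ← Real.rpow_neg hnR.le]
          have e3 : ((1 + Nr) ^ (1+ε))^d ≤ (2:ℝ) ^ ((1+ε)*(d:ℝ)) * (n:ℝ) ^ ((1+ε)*(d:ℝ)) := by
            have h1 : 1 + Nr ≤ 2*(n:ℝ) := by rw [hNr]; linarith [hn2]
            have h2 : ((1 + Nr) ^ (1+ε))^d ≤ ((2*(n:ℝ)) ^ (1+ε))^d :=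
              pow_le_pow_left₀ (Real.rpow_nonneg hNr0.le _)
                (Real.rpow_le_rpow hNr0.le h1 (by positivity)) d
            refine h2.trans_eq ?_
            rw [← Real.rpow_natCast ((2*(n:ℝ)) ^ (1+ε)) d, ← Real.rpow_mul (by positivity),
              Real.mul_rpow (by norm_num) hnR.le]
          calc r ^ ((d:ℝ)+q) * (((4*(d:ℝ)+5)/n)^d * ((1 + Nr) ^ (1+ε))^d)
              ≤ ((2*(d:ℝ)) ^ ((d:ℝ)+q) * (n:ℝ) ^ (-((d:ℝ)+q)))
                * (((4*(d:ℝ)+5)^d * (n:ℝ) ^ (-(d:ℝ)))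
                  * ((2:ℝ) ^ ((1+ε)*(d:ℝ)) * (n:ℝ) ^ ((1+ε)*(d:ℝ)))) := by
                rw [e1, e2]
                gcongr
            _ = D * ((n:ℝ) ^ (-((d:ℝ)+q)) * ((n:ℝ) ^ (-(d:ℝ)) * (n:ℝ) ^ ((1+ε)*(d:ℝ)))) := by
                rw [hD]
                ring
            _ = D * (n:ℝ) ^ (-δ') := by
                rw [← Real.rpow_add hnR, ← Real.rpow_add hnR]
                congr 1
                congr 1
                rw [hδ']
                ring
  filter_upwards [eventually_ge_atTop (2*d+4)] with n hn
  have hn1 : 1 ≤ n := by omega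
  have hn2 : (2*(d:ℝ)+4) ≤ (n:ℝ) := by
    have : ((2*d+4 : ℕ):ℝ) ≤ (n:ℝ) := by exact_mod_cast hn
    push_cast at this
    linarith
  exact MAIN n hn1 hn2

end RWRE7
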